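/- Let C be a category with pullbacks, K a Grothendieck pretopology on C, and B a full subcategory of C which is a base for (C, K); let K|_B be the induced coverage on B. Let F be a presheaf of sets on B. Then F is a sheaf on (B, K|_B) if and only if for every covering family {Aᵢ → A}_{i ∈ I} in K|_B and for every choice, for each pair (i, j) ∈ I × I, of a K-covering family {A_{ijk} → Aᵢ ×_A Aⱼ}_{k ∈ I_{ij}} of the fibred product Aᵢ ×_A Aⱼ (taken in C) by objects of B, the diagram F(A) → Π_{i ∈ I} F(Aᵢ) ⇉ Π_{i,j ∈ I, k ∈ I_{ij}} F(A_{ijk}) is an equalizer of sets. -/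

import Mathlib

open CategoryTheory Limits Opposite

universe w v u

/-- A morphism of `C` between objects satisfying `P`, regarded as a morphism of the full
subcategory of `C` determined by `P`. -/
def FullSubcategory.homOf {C : Type u} [Category.{v} C] {P : C → Prop} {X Y : C}
    (hX : P X) (hY : P Y) (f : X ⟶ Y) :
    (⟨X, hX⟩ : CategoryTheory.ObjectProperty.FullSubcategory P) ⟶ ⟨Y, hY⟩ := ObjectProperty.homMk f

section Aux

variable {C : Type u} [Category.{v} C]

/-- Every presieve is of the form `ofArrows` for the tautological indexing. -/
lemma presieve_eq_ofArrows {X : C} (S : Presieve X) :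
    Presieve.ofArrows (fun p : Σ Y : C, {f : Y ⟶ X // S f} => p.1) (fun p => p.2.1) = S := by
  funext Y
  ext g
  constructor
  · rintro ⟨p⟩
    exact p.2.2
  · intro hg
    exact Presieve.ofArrows.mk (⟨Y, g, hg⟩ : Σ Y : C, {f : Y ⟶ X // S f})

lemma map_homOf_comp {P : C → Prop} (F : (CategoryTheory.ObjectProperty.FullSubcategory P)ᵒᵖ ⥤ Type w)
    {X Y Z : C} (hX : P X) (hY : P Y) (hZ : P Z) (u : X ⟶ Y) (v : Y ⟶ Z)
    (s : F.obj (op ⟨Z, hZ⟩)) :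
    F.map (FullSubcategory.homOf hX hZ (u ≫ v)).op s =
      F.map (FullSubcategory.homOf hX hY u).op (F.map (FullSubcategory.homOf hY hZ v).op s) := by
  have h : FullSubcategory.homOf hX hZ (u ≫ v) =
      FullSubcategory.homOf hX hY u ≫ FullSubcategory.homOf hY hZ v := rfl
  rw [h, op_comp, F.map_comp]
  rfl

end Aux

/-- **Part (2) of the Comparison Lemma.**
Let `C` be a category with pullbacks, `K` a Grothendieck pretopology on `C`, and `P` a
predicate on objects of `C` whose full subcategory `B` is a base for `(C, K)`.  A presheaf
`F` on `B` is a sheaf for the restricted coverage `K|_B` (every compatible family for a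
covering family of `K|_B` has a unique amalgamation, compatibility being measured on all
commutative squares in `B`) if and only if for every covering family `{Aᵢ → A}` in `K|_B`
and every choice of `K`-covering families `{A_{ijk} → Aᵢ ×_A Aⱼ}` with sources in `B`, the
diagram `F(A) → Π F(Aᵢ) ⇉ Π F(A_{ijk})` is an equalizer. -/
theorem sheaf_on_base_iff_equalizer
    {C : Type u} [Category.{v} C] [HasPullbacks C]
    (K : Pretopology C) (P : C → Prop)
    (hbase : ∀ X : C, ∃ S ∈ K.coverings X, ∀ ⦃Y : C⦄ ⦃f : Y ⟶ X⦄, S f → P Y)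
    (F : (CategoryTheory.ObjectProperty.FullSubcategory P)ᵒᵖ ⥤ Type w) :
    -- `F` is a sheaf on `(B, K|_B)`:
    (∀ (ι : Type (max u v)) (A : C) (hA : P A) (X : ι → C) (hX : ∀ i, P (X i))
        (f : ∀ i, X i ⟶ A), Presieve.ofArrows X f ∈ K.coverings A →
      ∀ x : ∀ i, F.obj (op ⟨X i, hX i⟩),
        (∀ (i j : ι) (W : C) (hW : P W) (g₁ : W ⟶ X i) (g₂ : W ⟶ X j),
          g₁ ≫ f i = g₂ ≫ f j →
            F.map (FullSubcategory.homOf hW (hX i) g₁).op (x i) =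
              F.map (FullSubcategory.homOf hW (hX j) g₂).op (x j)) →
        ∃! s : F.obj (op ⟨A, hA⟩),
          ∀ i, F.map (FullSubcategory.homOf (hX i) hA (f i)).op s = x i)
    ↔
    -- the equalizer condition for all refinements of the pullbacks by objects of `B`:
    (∀ (ι : Type (max u v)) (A : C) (hA : P A) (X : ι → C) (hX : ∀ i, P (X i))
        (f : ∀ i, X i ⟶ A), Presieve.ofArrows X f ∈ K.coverings A →
      ∀ (κ : ι → ι → Type (max u v)) (Z : ∀ i j, κ i j → C)
        (hZ : ∀ i j k, P (Z i j k))
        (g : ∀ (i j) (k : κ i j), Z i j k ⟶ pullback (f i) (f j)),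
        (∀ i j, Presieve.ofArrows (Z i j) (g i j) ∈ K.coverings (pullback (f i) (f j))) →
      ∀ x : ∀ i, F.obj (op ⟨X i, hX i⟩),
        (∀ (i j) (k : κ i j),
          F.map (FullSubcategory.homOf (hZ i j k) (hX i)
              (g i j k ≫ pullback.fst (f i) (f j))).op (x i) =
            F.map (FullSubcategory.homOf (hZ i j k) (hX j)
              (g i j k ≫ pullback.snd (f i) (f j))).op (x j)) →
        ∃! s : F.obj (op ⟨A, hA⟩),
          ∀ i, F.map (FullSubcategory.homOf (hX i) hA (f i)).op s = x i) := by
  choose T hT hTP using hbase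
  constructor
  · intro hsheaf
    -- `F` is separated with respect to covers with sources in `B`.
    have sep : ∀ (A : C) (hA : P A) (S : Presieve A), S ∈ K.coverings A →
        (∀ ⦃Y : C⦄ ⦃e : Y ⟶ A⦄, S e → P Y) →
        ∀ a b : F.obj (op ⟨A, hA⟩),
          (∀ (Y : C) (hY : P Y) (e : Y ⟶ A), S e →
            F.map (FullSubcategory.homOf hY hA e).op a =
              F.map (FullSubcategory.homOf hY hA e).op b) → a = b := by
      intro A hA S hS hPS a b hab
      obtain ⟨s, -, huniq⟩ := hsheaf (Σ Y : C, {e : Y ⟶ A // S e}) A hA (fun p => p.1)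
        (fun p => hPS p.2.2) (fun p => p.2.1)
        (by rw [presieve_eq_ofArrows]; exact hS)
        (fun p => F.map (FullSubcategory.homOf (hPS p.2.2) hA p.2.1).op a)
        (fun p q W hW g₁ g₂ hcomm => by
          rw [← map_homOf_comp, ← map_homOf_comp, hcomm])
      have ha : a = s := huniq a (fun p => rfl)
      have hb : b = s := huniq b (fun p => (hab p.1 (hPS p.2.2) p.2.1 p.2.2).symm)
      rw [ha, hb]
    intro ι A hA X hX f hcov κ Z hZ g hgcov x hxcompat
    apply hsheaf ι A hA X hX f hcov x
    intro i j W hW g₁ g₂ hcomm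
    set h : W ⟶ pullback (f i) (f j) := pullback.lift g₁ g₂ hcomm with hh
    set R : Presieve W :=
      (Presieve.pullbackArrows h (Presieve.ofArrows (Z i j) (g i j))).bind
        (fun Y _ _ => T Y) with hRdef
    have hR : R ∈ K.coverings W :=
      K.transitive _ _ (K.pullbacks h _ (hgcov i j)) (fun Y e he => hT Y)
    have hRP : ∀ ⦃Y : C⦄ ⦃e : Y ⟶ W⦄, R e → P Y := by
      rintro Y e ⟨Q, t, e', he', ht, rfl⟩
      exact hTP Q ht
    apply sep W hW R hR hRP
    rintro V hV e ⟨Q, t, e', he', ht, rfl⟩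
    cases he' with
    | mk Zc gc hgc =>
      cases hgc with
      | mk k =>
        have e1 : pullback.snd (g i j k) h ≫ g₁ =
            pullback.fst (g i j k) h ≫ g i j k ≫ pullback.fst (f i) (f j) := by
          have h1 : h ≫ pullback.fst (f i) (f j) = g₁ := pullback.lift_fst _ _ _
          rw [← h1, ← Category.assoc, ← pullback.condition, Category.assoc]
        have e2 : pullback.snd (g i j k) h ≫ g₂ =
            pullback.fst (g i j k) h ≫ g i j k ≫ pullback.snd (f i) (f j) := by
          have h2 : h ≫ pullback.snd (f i) (f j) = g₂ := pullback.lift_snd _ _ _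
          rw [← h2, ← Category.assoc, ← pullback.condition, Category.assoc]
        have e1' : (t ≫ pullback.snd (g i j k) h) ≫ g₁ =
            (t ≫ pullback.fst (g i j k) h) ≫ (g i j k ≫ pullback.fst (f i) (f j)) := by
          simp only [Category.assoc]; rw [e1]
        have e2' : (t ≫ pullback.snd (g i j k) h) ≫ g₂ =
            (t ≫ pullback.fst (g i j k) h) ≫ (g i j k ≫ pullback.snd (f i) (f j)) := by
          simp only [Category.assoc]; rw [e2]
        calc
          F.map (FullSubcategory.homOf hV hW (t ≫ pullback.snd (g i j k) h)).op
              (F.map (FullSubcategory.homOf hW (hX i) g₁).op (x i))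
            = F.map (FullSubcategory.homOf hV (hX i)
                ((t ≫ pullback.snd (g i j k) h) ≫ g₁)).op (x i) :=
              (map_homOf_comp F hV hW (hX i) _ _ _).symm
          _ = F.map (FullSubcategory.homOf hV (hX i)
                ((t ≫ pullback.fst (g i j k) h) ≫
                  (g i j k ≫ pullback.fst (f i) (f j)))).op (x i) := by rw [e1']
          _ = F.map (FullSubcategory.homOf hV (hZ i j k) (t ≫ pullback.fst (g i j k) h)).op
                (F.map (FullSubcategory.homOf (hZ i j k) (hX i)
                  (g i j k ≫ pullback.fst (f i) (f j))).op (x i)) :=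
              map_homOf_comp F hV (hZ i j k) (hX i) _ _ _
          _ = F.map (FullSubcategory.homOf hV (hZ i j k) (t ≫ pullback.fst (g i j k) h)).op
                (F.map (FullSubcategory.homOf (hZ i j k) (hX j)
                  (g i j k ≫ pullback.snd (f i) (f j))).op (x j)) := by
              rw [hxcompat i j k]
          _ = F.map (FullSubcategory.homOf hV (hX j)
                ((t ≫ pullback.fst (g i j k) h) ≫
                  (g i j k ≫ pullback.snd (f i) (f j)))).op (x j) :=
              (map_homOf_comp F hV (hZ i j k) (hX j) _ _ _).symm
          _ = F.map (FullSubcategory.homOf hV (hX j)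
                ((t ≫ pullback.snd (g i j k) h) ≫ g₂)).op (x j) := by rw [e2']
          _ = F.map (FullSubcategory.homOf hV hW (t ≫ pullback.snd (g i j k) h)).op
                (F.map (FullSubcategory.homOf hW (hX j) g₂).op (x j)) :=
              map_homOf_comp F hV hW (hX j) _ _ _
  · intro heq ι A hA X hX f hcov x hcompat
    exact heq ι A hA X hX f hcov
      (fun i j => Σ Y : C, {e : Y ⟶ pullback (f i) (f j) // T (pullback (f i) (f j)) e})
      (fun i j p => p.1) (fun i j p => hTP _ p.2.2) (fun i j p => p.2.1)
      (fun i j => by rw [presieve_eq_ofArrows]; exact hT _) x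
      (fun i j k => hcompat i j _ _ _ _
        (by rw [Category.assoc, Category.assoc, pullback.condition]))
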